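/- Let λ be a σ-finite measure on a measurable space A, let α > 0, and let q : A → ℝ be bounded measurable with Z := ∫_A exp(q(a)/α) dλ(a) satisfying 0 < Z < ∞. Then α · log Z = sup over all measurable p : A → [0,∞) with ∫_A p dλ = 1 and ∫_A p · |log p| dλ < ∞ of the quantity ∫_A ( q(a) − α · log p(a) ) · p(a) dλ(a) (convention 0 · log 0 = 0). The supremum is attained by p⋆ := exp(q/α)/Z, and for any admissible p, ∫_A (q − α log p) p dλ = α · log Z if and only if p = p⋆ holds λ-almost everywhere. -/
import Mathlib


open MeasureTheory

/-- A density `p` is an admissible policy density w.r.t. `lam`: measurable, nonnegative,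
integrating to one, and with finite entropy integral `∫ p |log p| < ∞`. -/
def Admissible {A : Type*} [MeasurableSpace A] (lam : Measure A) (p : A → ℝ) : Prop :=
  Measurable p ∧ (∀ a, 0 ≤ p a) ∧ Integrable p lam ∧ (∫ a, p a ∂lam = 1) ∧
    Integrable (fun a => p a * |Real.log (p a)|) lam

/-- The entropy-regularized expected value `∫ (q - α log p) p dλ`. -/
noncomputable def gibbsVal {A : Type*} [MeasurableSpace A]
    (lam : Measure A) (α : ℝ) (q p : A → ℝ) : ℝ :=
  ∫ a, (q a - α * Real.log (p a)) * p a ∂lam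

lemma key_ineq {x y : ℝ} (hx : 0 ≤ x) (hy : 0 < y) :
    x - y ≤ x * Real.log x - x * Real.log y := by
  rcases hx.eq_or_lt with h | h
  · simp [← h]; linarith
  · have h1 : Real.log (y / x) ≤ y / x - 1 := Real.log_le_sub_one_of_pos (div_pos hy h)
    rw [Real.log_div hy.ne' h.ne'] at h1
    have h2 := mul_le_mul_of_nonneg_left h1 h.le
    have h3 : x * (y / x - 1) = y - x := by field_simp
    nlinarith

lemma key_strict {x y : ℝ} (hx : 0 ≤ x) (hy : 0 < y) (hne : x ≠ y) :
    x - y < x * Real.log x - x * Real.log y := by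
  rcases hx.eq_or_lt with h | h
  · simp [← h]; linarith
  · have hd : y / x ≠ 1 := by
      intro hc
      apply hne
      field_simp at hc
      linarith
    have h1 : Real.log (y / x) < y / x - 1 :=
      Real.log_lt_sub_one_of_pos (div_pos hy h) hd
    rw [Real.log_div hy.ne' h.ne'] at h1
    have h2 := mul_lt_mul_of_pos_left h1 h
    have h3 : x * (y / x - 1) = y - x := by field_simp
    nlinarith

theorem stmt4 {A : Type*} [MeasurableSpace A] (lam : Measure A) [SigmaFinite lam]
    (α : ℝ) (hα : 0 < α)
    (q : A → ℝ) (hq : Measurable q) (hqb : ∃ C : ℝ, ∀ a, |q a| ≤ C)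
    (hZint : Integrable (fun a => Real.exp (q a / α)) lam)
    (hZpos : 0 < ∫ a, Real.exp (q a / α) ∂lam) :
    (∀ p : A → ℝ, Admissible lam p →
        gibbsVal lam α q p ≤ α * Real.log (∫ a, Real.exp (q a / α) ∂lam)) ∧
    (Admissible lam (fun a => Real.exp (q a / α) / ∫ b, Real.exp (q b / α) ∂lam) ∧
      gibbsVal lam α q (fun a => Real.exp (q a / α) / ∫ b, Real.exp (q b / α) ∂lam)
        = α * Real.log (∫ a, Real.exp (q a / α) ∂lam)) ∧
    (∀ p : A → ℝ, Admissible lam p →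
        (gibbsVal lam α q p = α * Real.log (∫ a, Real.exp (q a / α) ∂lam) ↔
          p =ᵐ[lam] fun a => Real.exp (q a / α) / ∫ b, Real.exp (q b / α) ∂lam)) := by
  obtain ⟨C, hC⟩ := hqb
  set Z : ℝ := ∫ a, Real.exp (q a / α) ∂lam with hZdef
  have hZne : Z ≠ 0 := hZpos.ne'
  set ps : A → ℝ := fun a => Real.exp (q a / α) / Z with hpsdef
  have hpspos : ∀ a, 0 < ps a := fun a => div_pos (Real.exp_pos _) hZpos
  have hlogps : ∀ a, Real.log (ps a) = q a / α - Real.log Z := by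
    intro a
    rw [hpsdef]
    rw [Real.log_div (Real.exp_pos _).ne' hZne, Real.log_exp]
  have hpsm : Measurable ps := ((hq.div_const α).exp).div_const Z
  have hpsint : Integrable ps lam := hZint.div_const Z
  have hpsone : ∫ a, ps a ∂lam = 1 := by
    rw [hpsdef]
    simp only [integral_div]
    exact div_self hZne
  -- admissibility of ps
  have hpsadm : Admissible lam ps := by
    refine ⟨hpsm, fun a => (hpspos a).le, hpsint, hpsone, ?_⟩
    refine (hpsint.const_mul (C / α + |Real.log Z|)).mono'
      ((hpsm.mul (hpsm.log.abs)).aestronglyMeasurable) ?_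
    filter_upwards with a
    rw [Real.norm_eq_abs, abs_of_nonneg (mul_nonneg (hpspos a).le (abs_nonneg _)),
      mul_comm ((C / α + |Real.log Z|)) (ps a)]
    refine mul_le_mul_of_nonneg_left ?_ (hpspos a).le
    rw [hlogps a]
    calc |q a / α - Real.log Z| ≤ |q a / α| + |Real.log Z| := abs_sub _ _
      _ ≤ C / α + |Real.log Z| := by
          have h1 : |q a / α| = |q a| / α := by rw [abs_div, abs_of_pos hα]
          rw [h1]
          gcongr
          exact hC a
  -- key decomposition
  have hkey : ∀ p : A → ℝ, Admissible lam p →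
      Integrable (fun a => p a * Real.log (p a) - p a * Real.log (ps a)) lam ∧
      gibbsVal lam α q p = α * Real.log Z -
        α * ∫ a, (p a * Real.log (p a) - p a * Real.log (ps a)) ∂lam := by
    rintro p ⟨hpm, hp0, hpint, hp1, hpent⟩
    have I1 : Integrable (fun a => p a * Real.log (p a)) lam := by
      refine hpent.mono' ((hpm.mul hpm.log).aestronglyMeasurable) ?_
      filter_upwards with a
      rw [Real.norm_eq_abs, abs_mul, abs_of_nonneg (hp0 a)]
    have I2 : Integrable (fun a => p a * q a) lam := by
      refine (hpint.const_mul C).mono' ((hpm.mul hq).aestronglyMeasurable) ?_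
      filter_upwards with a
      rw [Real.norm_eq_abs, abs_mul, abs_of_nonneg (hp0 a)]
      calc p a * |q a| ≤ p a * C := mul_le_mul_of_nonneg_left (hC a) (hp0 a)
        _ = C * p a := mul_comm _ _
    have I3 : Integrable (fun a => p a * Real.log (ps a)) lam := by
      refine ((I2.div_const α).sub (hpint.const_mul (Real.log Z))).congr
        (Filter.Eventually.of_forall fun a => ?_)
      simp only [Pi.sub_apply]
      rw [hlogps a]; ring
    have Ig : Integrable (fun a => p a * Real.log (p a) - p a * Real.log (ps a)) lam :=
      I1.sub I3
    refine ⟨Ig, ?_⟩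
    have hpoint : ∀ a, (q a - α * Real.log (p a)) * p a =
        α * Real.log Z * p a - α * (p a * Real.log (p a) - p a * Real.log (ps a)) := by
      intro a
      rw [hlogps a]
      field_simp
      ring
    unfold gibbsVal
    simp only [hpoint]
    rw [integral_sub (hpint.const_mul _) (Ig.const_mul α),
      integral_const_mul, integral_const_mul, hp1, mul_one]
  -- nonnegativity of the relative entropy term
  have hD0 : ∀ p : A → ℝ, Admissible lam p →
      0 ≤ ∫ a, (p a * Real.log (p a) - p a * Real.log (ps a)) ∂lam := by
    intro p hpa
    obtain ⟨hpm, hp0, hpint, hp1, hpent⟩ := hpa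
    have Ig := (hkey p ⟨hpm, hp0, hpint, hp1, hpent⟩).1
    have h0 : ∫ a, (p a - ps a) ∂lam = 0 := by
      rw [integral_sub hpint hpsint, hp1, hpsone]; ring
    calc (0:ℝ) = ∫ a, (p a - ps a) ∂lam := h0.symm
      _ ≤ _ := integral_mono (hpint.sub hpsint) Ig
          (fun a => key_ineq (hp0 a) (hpspos a))
  -- value at ps
  have hvalps : gibbsVal lam α q ps = α * Real.log Z := by
    rw [(hkey ps hpsadm).2]
    simp
  refine ⟨?_, ⟨hpsadm, hvalps⟩, ?_⟩
  · intro p hpa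
    rw [(hkey p hpa).2]
    have := hD0 p hpa
    nlinarith
  · intro p hpa
    constructor
    · intro heq
      obtain ⟨hpm, hp0, hpint, hp1, hpent⟩ := hpa
      have Ig := (hkey p ⟨hpm, hp0, hpint, hp1, hpent⟩).1
      have h2 := (hkey p ⟨hpm, hp0, hpint, hp1, hpent⟩).2
      rw [heq] at h2
      have hD : ∫ a, (p a * Real.log (p a) - p a * Real.log (ps a)) ∂lam = 0 := by
        have hαD : α * ∫ a, (p a * Real.log (p a) - p a * Real.log (ps a)) ∂lam = 0 := by
          linarith
        exact (mul_eq_zero.mp hαD).resolve_left hα.ne'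
      have h0 : ∫ a, (p a - ps a) ∂lam = 0 := by
        rw [integral_sub hpint hpsint, hp1, hpsone]; ring
      have hint : Integrable
          (fun a => (p a * Real.log (p a) - p a * Real.log (ps a)) - (p a - ps a)) lam :=
        Ig.sub (hpint.sub hpsint)
      have hnn : 0 ≤ fun a => (p a * Real.log (p a) - p a * Real.log (ps a)) - (p a - ps a) := by
        intro a
        simp only [Pi.zero_apply]
        have := key_ineq (hp0 a) (hpspos a)
        linarith
      have Ipps : Integrable (fun a => p a - ps a) lam := hpint.sub hpsint
      have hzero : ∫ a, ((p a * Real.log (p a) - p a * Real.log (ps a)) - (p a - ps a)) ∂lam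
          = 0 := by
        rw [integral_sub Ig Ipps, hD, h0]; ring
      have hae := (integral_eq_zero_iff_of_nonneg hnn hint).mp hzero
      filter_upwards [hae] with a ha
      simp only [Pi.zero_apply] at ha
      by_contra hne
      have := key_strict (hp0 a) (hpspos a) hne
      linarith
    · intro hae
      have : gibbsVal lam α q p = gibbsVal lam α q ps := by
        unfold gibbsVal
        apply integral_congr_ae
        filter_upwards [hae] with a ha
        rw [ha]
      rw [this, hvalps]
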